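/- Let P_NS := h̃ ∘ g̃⁻¹ be the neutron star equation of state. Then there exist constants 0 < c ≤ C such that: (i) |P_NS(ρ) − ρ/3| ≤ C ρ^{1/2} for all ρ ≥ 0, and |P_NS′(ρ) − 1/3| ≤ C ρ^{−1/2} for all ρ > 0; (ii) for all sufficiently small ρ > 0, c ρ^{2/3} ≤ P_NS′(ρ) ≤ ρ^{2/3} and c ρ^{5/3} ≤ P_NS(ρ) ≤ C ρ^{5/3}; (iii) P_NS : [0,∞) → [0,∞) is a bijection whose inverse satisfies |P_NS⁻¹(q) − 3q| ≤ C q^{1/2} for all q > 0. -/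

import Mathlib

open MeasureTheory

noncomputable section

/-- `g̃(y) = 3 ∫₀^y s² √(1+s²) ds`, the neutron-star energy density parametrization. -/
def gtilde (y : ℝ) : ℝ := 3 * ∫ s in (0:ℝ)..y, s ^ 2 * Real.sqrt (1 + s ^ 2)

/-- `h̃(y) = ∫₀^y s⁴ / √(1+s²) ds`, the neutron-star pressure parametrization. -/
def htilde (y : ℝ) : ℝ := ∫ s in (0:ℝ)..y, s ^ 4 / Real.sqrt (1 + s ^ 2)

open intervalIntegral Set Filter

def fg (s : ℝ) : ℝ := s ^ 2 * Real.sqrt (1 + s ^ 2)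
def fh (s : ℝ) : ℝ := s ^ 4 / Real.sqrt (1 + s ^ 2)

lemma one_le_sq (s : ℝ) : 1 ≤ Real.sqrt (1 + s ^ 2) :=
  Real.le_sqrt_of_sq_le (by nlinarith [sq_nonneg s])

lemma sq_pos' (s : ℝ) : 0 < Real.sqrt (1 + s ^ 2) := lt_of_lt_of_le one_pos (one_le_sq s)

lemma sqrt_le_add (s : ℝ) (hs : 0 ≤ s) : Real.sqrt (1 + s ^ 2) ≤ 1 + s :=
  Real.sqrt_le_iff.mpr ⟨by linarith, by nlinarith⟩

lemma le_sqrt'' (s : ℝ) : s ≤ Real.sqrt (1 + s ^ 2) :=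
  Real.le_sqrt_of_sq_le (by linarith)

lemma cont_fg : Continuous fg :=
  (continuous_pow 2).mul ((continuous_const.add (continuous_pow 2)).sqrt)

lemma cont_fh : Continuous fh :=
  (continuous_pow 4).div ((continuous_const.add (continuous_pow 2)).sqrt)
    (fun s => (sq_pos' s).ne')

lemma int_fg (a b : ℝ) : IntervalIntegrable fg volume a b := cont_fg.intervalIntegrable a b
lemma int_fh (a b : ℝ) : IntervalIntegrable fh volume a b := cont_fh.intervalIntegrable a b

lemma fg_nonneg (s : ℝ) : 0 ≤ fg s := mul_nonneg (sq_nonneg s) (Real.sqrt_nonneg _)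
lemma fh_nonneg (s : ℝ) : 0 ≤ fh s := div_nonneg (by positivity) (Real.sqrt_nonneg _)

lemma hasDerivAt_g (y : ℝ) : HasDerivAt gtilde (3 * fg y) y := by
  have : HasDerivAt (fun u => ∫ s in (0:ℝ)..u, fg s) (fg y) y :=
    (cont_fg.integral_hasStrictDerivAt 0 y).hasDerivAt
  exact this.const_mul 3

lemma hasDerivAt_h (y : ℝ) : HasDerivAt htilde (fh y) y :=
  (cont_fh.integral_hasStrictDerivAt 0 y).hasDerivAt

lemma cont_g : Continuous gtilde :=
  continuous_iff_continuousAt.mpr fun y => (hasDerivAt_g y).continuousAt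

lemma cont_h : Continuous htilde :=
  continuous_iff_continuousAt.mpr fun y => (hasDerivAt_h y).continuousAt

lemma g_sub (a b : ℝ) : gtilde b - gtilde a = 3 * ∫ s in a..b, fg s := by
  unfold gtilde
  rw [← mul_sub, ← integral_interval_sub_left (int_fg 0 b) (int_fg 0 a)]
  rfl

lemma h_sub (a b : ℝ) : htilde b - htilde a = ∫ s in a..b, fh s := by
  unfold htilde
  rw [← integral_interval_sub_left (int_fh 0 b) (int_fh 0 a)]
  rfl

/-- gtilde b - gtilde a ≥ b^3 - a^3 for a ≤ b -/
lemma g_sub_ge {a b : ℝ} (h : a ≤ b) : b ^ 3 - a ^ 3 ≤ gtilde b - gtilde a := by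
  rw [g_sub]
  have h1 : (∫ s in a..b, s ^ 2) ≤ ∫ s in a..b, fg s := by
    apply integral_mono_on h ((continuous_pow 2).intervalIntegrable a b) (int_fg a b)
    intro x _
    simp only [fg]
    nlinarith [one_le_sq x, sq_nonneg x]
  have h2 : (∫ s in a..b, s ^ 2) = (b ^ 3 - a ^ 3) / 3 := by
    rw [integral_pow]; norm_num
  rw [h2] at h1; linarith

lemma g_strictMono : StrictMono gtilde := by
  intro a b hab
  have h1 := g_sub_ge hab.le
  have h2 : a ^ 3 < b ^ 3 := Odd.strictMono_pow ⟨1, by norm_num⟩ hab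
  linarith

lemma g_zero : gtilde 0 = 0 := by simp [gtilde]
lemma h_zero : htilde 0 = 0 := by simp [htilde]

lemma g_le_cube {y : ℝ} (hy : y ≤ 0) : gtilde y ≤ y ^ 3 := by
  have := g_sub_ge hy
  simp only [g_zero] at this
  norm_num at this ⊢
  linarith

lemma cube_le_g {y : ℝ} (hy : 0 ≤ y) : y ^ 3 ≤ gtilde y := by
  have := g_sub_ge hy
  simp only [g_zero] at this
  norm_num at this ⊢
  linarith

lemma g_surj : Function.Surjective gtilde := by
  intro z
  set a := min z (-1) with ha'
  set b := max z 1 with hb'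
  have hab : a ≤ b := le_trans (min_le_right _ _) (le_trans (by norm_num) (le_max_right _ _))
  have ha : gtilde a ≤ z := by
    have h1 : a ≤ -1 := min_le_right _ _
    have h2 : a ≤ z := min_le_left _ _
    have := g_le_cube (by linarith : a ≤ 0)
    nlinarith [sq_nonneg a, sq_nonneg (a+1)]
  have hb : z ≤ gtilde b := by
    have h1 : (1:ℝ) ≤ b := le_max_right _ _
    have h2 : z ≤ b := le_max_left _ _
    have := cube_le_g (by linarith : (0:ℝ) ≤ b)
    nlinarith [sq_nonneg b, sq_nonneg (b-1)]
  obtain ⟨y, _, hy⟩ := intermediate_value_Icc hab cont_g.continuousOn ⟨ha, hb⟩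
  exact ⟨y, hy⟩

def gIso : ℝ ≃o ℝ := StrictMono.orderIsoOfSurjective gtilde g_strictMono g_surj

lemma gIso_apply (y : ℝ) : gIso y = gtilde y := rfl
lemma g_ginv (q : ℝ) : gtilde (gIso.symm q) = q := gIso.apply_symm_apply q
lemma ginv_zero : gIso.symm 0 = 0 := by
  have h := gIso.symm_apply_apply 0
  rw [gIso_apply, g_zero] at h
  exact h

lemma ginv_nonneg {ρ : ℝ} (hρ : 0 ≤ ρ) : 0 ≤ gIso.symm ρ := by
  have := gIso.symm.monotone hρ
  rwa [ginv_zero] at this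

lemma ginv_pos {ρ : ℝ} (hρ : 0 < ρ) : 0 < gIso.symm ρ := by
  have := gIso.symm.strictMono hρ
  rwa [ginv_zero] at this

def fF (s : ℝ) : ℝ := s ^ 2 / Real.sqrt (1 + s ^ 2)

lemma cont_fF : Continuous fF :=
  (continuous_pow 2).div ((continuous_const.add (continuous_pow 2)).sqrt)
    (fun s => (sq_pos' s).ne')

lemma int_fF (a b : ℝ) : IntervalIntegrable fF volume a b := cont_fF.intervalIntegrable a b

/-- The key algebraic identity: g/3 − h = ∫ s²/√(1+s²). -/
lemma F_eq (y : ℝ) : gtilde y / 3 - htilde y = ∫ s in (0:ℝ)..y, fF s := by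
  unfold gtilde htilde
  rw [mul_div_cancel_left₀ _ (by norm_num : (3:ℝ) ≠ 0)]
  show (∫ s in (0:ℝ)..y, fg s) - (∫ s in (0:ℝ)..y, fh s) = _
  rw [← integral_sub (int_fg 0 y) (int_fh 0 y)]
  apply integral_congr
  intro s _
  have hs := sq_pos' s
  have hss := Real.mul_self_sqrt (by positivity : (0:ℝ) ≤ 1 + s ^ 2)
  show fg s - fh s = fF s
  unfold fg fh fF
  field_simp
  nlinarith [hss]

lemma F_nonneg {y : ℝ} (hy : 0 ≤ y) : 0 ≤ ∫ s in (0:ℝ)..y, fF s :=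
  integral_nonneg hy (fun s _ => div_nonneg (sq_nonneg s) (Real.sqrt_nonneg _))

lemma F_le_cube {y : ℝ} (hy : 0 ≤ y) : (∫ s in (0:ℝ)..y, fF s) ≤ y ^ 3 / 3 := by
  have h1 : (∫ s in (0:ℝ)..y, fF s) ≤ ∫ s in (0:ℝ)..y, s ^ 2 := by
    apply integral_mono_on hy (int_fF 0 y) ((continuous_pow 2).intervalIntegrable 0 y)
    intro x _
    rw [fF, div_le_iff₀ (sq_pos' x)]
    nlinarith [one_le_sq x, sq_nonneg x]
  have h2 : (∫ s in (0:ℝ)..y, (s:ℝ) ^ 2) = y ^ 3 / 3 := by rw [integral_pow]; norm_num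
  linarith

lemma F_le_sq {y : ℝ} (hy : 0 ≤ y) : (∫ s in (0:ℝ)..y, fF s) ≤ y ^ 2 / 2 := by
  have h1 : (∫ s in (0:ℝ)..y, fF s) ≤ ∫ s in (0:ℝ)..y, s := by
    apply integral_mono_on hy (int_fF 0 y) (continuous_id.intervalIntegrable 0 y)
    intro x hx
    rw [fF, div_le_iff₀ (sq_pos' x)]
    simp only [id_eq]
    nlinarith [mul_le_mul_of_nonneg_left (le_sqrt'' x) hx.1]
  have h2 : (∫ s in (0:ℝ)..y, (s:ℝ)) = y ^ 2 / 2 := by simp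
  linarith

lemma g_upper {y : ℝ} (hy : 0 ≤ y) : gtilde y ≤ y ^ 3 + 3 / 4 * y ^ 4 := by
  unfold gtilde
  have h1 : (∫ s in (0:ℝ)..y, fg s) ≤ ∫ s in (0:ℝ)..y, (s ^ 2 + s ^ 3) := by
    apply integral_mono_on hy (int_fg 0 y)
      (((continuous_pow 2).add (continuous_pow 3)).intervalIntegrable 0 y)
    intro x hx
    have h := sqrt_le_add x hx.1
    simp only [fg, Pi.add_apply]
    nlinarith [sq_nonneg x, hx.1]
  have h2 : (∫ s in (0:ℝ)..y, ((s:ℝ) ^ 2 + s ^ 3)) = y ^ 3 / 3 + y ^ 4 / 4 := by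
    rw [integral_add ((continuous_pow 2).intervalIntegrable 0 y)
      ((continuous_pow 3).intervalIntegrable 0 y), integral_pow, integral_pow]
    norm_num
  show 3 * (∫ s in (0:ℝ)..y, fg s) ≤ _
  rw [h2] at h1
  linarith

lemma h_upper {y : ℝ} (hy : 0 ≤ y) : htilde y ≤ y ^ 5 / 5 := by
  unfold htilde
  have h1 : (∫ s in (0:ℝ)..y, fh s) ≤ ∫ s in (0:ℝ)..y, s ^ 4 := by
    apply integral_mono_on hy (int_fh 0 y) ((continuous_pow 4).intervalIntegrable 0 y)
    intro x _
    rw [fh, div_le_iff₀ (sq_pos' x)]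
    nlinarith [one_le_sq x, sq_nonneg (x^2)]
  have h2 : (∫ s in (0:ℝ)..y, (s:ℝ) ^ 4) = y ^ 5 / 5 := by rw [integral_pow]; norm_num
  show (∫ s in (0:ℝ)..y, fh s) ≤ _
  linarith

lemma h_lower {y : ℝ} (hy : 0 ≤ y) : y ^ 5 / (5 * (1 + y)) ≤ htilde y := by
  have h1 : (∫ s in (0:ℝ)..y, s ^ 4 / (1 + y)) ≤ ∫ s in (0:ℝ)..y, fh s := by
    apply integral_mono_on hy
      (((continuous_pow 4).div_const _).intervalIntegrable 0 y) (int_fh 0 y)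
    intro x hx
    rw [fh]
    apply div_le_div_of_nonneg_left (by positivity) (sq_pos' x)
    calc Real.sqrt (1 + x ^ 2) ≤ 1 + x := sqrt_le_add x hx.1
      _ ≤ 1 + y := by linarith [hx.2]
  have h2 : (∫ s in (0:ℝ)..y, (s:ℝ) ^ 4 / (1 + y)) = y ^ 5 / 5 / (1 + y) := by
    rw [intervalIntegral.integral_div, integral_pow]; norm_num
  rw [h2] at h1
  show _ ≤ htilde y
  calc y ^ 5 / (5 * (1 + y)) = y ^ 5 / 5 / (1 + y) := by rw [div_div]
    _ ≤ htilde y := h1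

lemma P_eq (P : ℝ → ℝ) (hP : ∀ y : ℝ, 0 ≤ y → P (gtilde y) = htilde y)
    {ρ : ℝ} (hρ : 0 ≤ ρ) : P ρ = htilde (gIso.symm ρ) := by
  conv_lhs => rw [← g_ginv ρ]
  exact hP _ (ginv_nonneg hρ)

lemma deriv_P (P : ℝ → ℝ) (hP : ∀ y : ℝ, 0 ≤ y → P (gtilde y) = htilde y)
    {ρ : ℝ} (hρ : 0 < ρ) :
    deriv P ρ = (gIso.symm ρ) ^ 2 / (3 * (1 + (gIso.symm ρ) ^ 2)) := by
  set y := gIso.symm ρ with hy'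
  have hy : 0 < y := ginv_pos hρ
  have hsne : Real.sqrt (1 + y ^ 2) ≠ 0 := (sq_pos' y).ne'
  have hfg : 0 < 3 * fg y := by
    have : 0 < fg y := mul_pos (by positivity) (sq_pos' y)
    linarith
  have hYc : ContinuousAt (fun q : ℝ => (gIso.symm q : ℝ)) ρ := gIso.symm.continuous.continuousAt
  have hYd : HasDerivAt (fun q : ℝ => (gIso.symm q : ℝ)) (3 * fg y)⁻¹ ρ :=
    HasDerivAt.of_local_left_inverse hYc (hasDerivAt_g y) hfg.ne'
      (Filter.Eventually.of_forall g_ginv)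
  have hcomp : HasDerivAt (fun q : ℝ => htilde (gIso.symm q)) (fh y * (3 * fg y)⁻¹) ρ :=
    by have h := (hasDerivAt_h (gIso.symm ρ)).comp ρ hYd; exact h
  have hEv : P =ᶠ[nhds ρ] fun q : ℝ => htilde (gIso.symm q) := by
    filter_upwards [isOpen_Ioi.mem_nhds hρ] with q hq
    exact P_eq P hP (le_of_lt hq)
  rw [hEv.deriv_eq, hcomp.deriv]
  have hss : Real.sqrt (1 + y ^ 2) * Real.sqrt (1 + y ^ 2) = 1 + y ^ 2 :=
    Real.mul_self_sqrt (by positivity)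
  rw [fh, fg]
  field_simp
  linear_combination (-1) * hss

lemma quart_le_g {y : ℝ} (hy : 0 ≤ y) : 3 / 4 * y ^ 4 ≤ gtilde y := by
  unfold gtilde
  have h1 : (∫ s in (0:ℝ)..y, s ^ 3) ≤ ∫ s in (0:ℝ)..y, fg s := by
    apply integral_mono_on hy ((continuous_pow 3).intervalIntegrable 0 y) (int_fg 0 y)
    intro x hx
    simp only [fg]
    nlinarith [mul_le_mul_of_nonneg_left (le_sqrt'' x) (sq_nonneg x)]
  have h2 : (∫ s in (0:ℝ)..y, (s:ℝ) ^ 3) = y ^ 4 / 4 := by rw [integral_pow]; norm_num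
  rw [h2] at h1
  show _ ≤ 3 * ∫ s in (0:ℝ)..y, fg s
  linarith

lemma h_nonneg {y : ℝ} (hy : 0 ≤ y) : 0 ≤ htilde y :=
  integral_nonneg hy (fun s _ => fh_nonneg s)

lemma h_lt_h {a b : ℝ} (ha : 0 ≤ a) (hab : a < b) : htilde a < htilde b := by
  have h1 : 0 < ∫ s in a..b, fh s := by
    apply intervalIntegral_pos_of_pos_on (int_fh a b) _ hab
    intro x hx
    have hx0 : 0 < x := lt_of_le_of_lt ha hx.1
    exact div_pos (by positivity) (sq_pos' x)
  have := h_sub a b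
  linarith

lemma rpow23_ge {y ρ : ℝ} (hy : 0 ≤ y) (h : y ^ 3 ≤ ρ) : y ^ 2 ≤ ρ ^ ((2:ℝ)/3) := by
  calc y ^ 2 = ((y:ℝ) ^ (3:ℕ)) ^ ((2:ℝ)/3) := by
        rw [← Real.rpow_natCast y 3, ← Real.rpow_mul hy]
        norm_num
    _ ≤ ρ ^ ((2:ℝ)/3) := Real.rpow_le_rpow (by positivity) h (by norm_num)

lemma rpow53_ge {y ρ : ℝ} (hy : 0 ≤ y) (h : y ^ 3 ≤ ρ) : y ^ 5 ≤ ρ ^ ((5:ℝ)/3) := by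
  calc y ^ 5 = ((y:ℝ) ^ (3:ℕ)) ^ ((5:ℝ)/3) := by
        rw [← Real.rpow_natCast y 3, ← Real.rpow_mul hy]
        rw [show (((3:ℕ):ℝ) * (5/3)) = ((5:ℕ):ℝ) by norm_num, Real.rpow_natCast]
    _ ≤ ρ ^ ((5:ℝ)/3) := Real.rpow_le_rpow (by positivity) h (by norm_num)

lemma rpow23_le {y ρ : ℝ} (hy : 0 ≤ y) (hρ : 0 ≤ ρ) (h : ρ ≤ 2 * y ^ 3) :
    ρ ^ ((2:ℝ)/3) ≤ 2 * y ^ 2 := by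
  have h2 : (2:ℝ) ^ ((2:ℝ)/3) ≤ 2 := by
    calc (2:ℝ) ^ ((2:ℝ)/3) ≤ 2 ^ (1:ℝ) :=
          Real.rpow_le_rpow_of_exponent_le one_le_two (by norm_num)
      _ = 2 := Real.rpow_one 2
  calc ρ ^ ((2:ℝ)/3) ≤ (2 * y ^ 3) ^ ((2:ℝ)/3) := Real.rpow_le_rpow hρ h (by norm_num)
    _ = 2 ^ ((2:ℝ)/3) * ((y:ℝ) ^ (3:ℕ)) ^ ((2:ℝ)/3) :=
        Real.mul_rpow (by norm_num) (by positivity)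
    _ = 2 ^ ((2:ℝ)/3) * y ^ 2 := by
        rw [← Real.rpow_natCast y 3, ← Real.rpow_mul hy]
        norm_num
    _ ≤ 2 * y ^ 2 := by nlinarith [sq_nonneg y, h2, Real.rpow_nonneg (by norm_num : (0:ℝ) ≤ 2) ((2:ℝ)/3)]

lemma rpow53_le {y ρ : ℝ} (hy : 0 ≤ y) (hρ : 0 ≤ ρ) (h : ρ ≤ 2 * y ^ 3) :
    ρ ^ ((5:ℝ)/3) ≤ 4 * y ^ 5 := by
  have h2 : (2:ℝ) ^ ((5:ℝ)/3) ≤ 4 := by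
    calc (2:ℝ) ^ ((5:ℝ)/3) ≤ 2 ^ (2:ℝ) :=
          Real.rpow_le_rpow_of_exponent_le one_le_two (by norm_num)
      _ = 4 := by
          rw [show (2:ℝ) = ((2:ℕ):ℝ) by norm_num, Real.rpow_natCast]; norm_num
  have h5 : (0:ℝ) ≤ y ^ 5 := by positivity
  calc ρ ^ ((5:ℝ)/3) ≤ (2 * y ^ 3) ^ ((5:ℝ)/3) := Real.rpow_le_rpow hρ h (by norm_num)
    _ = 2 ^ ((5:ℝ)/3) * ((y:ℝ) ^ (3:ℕ)) ^ ((5:ℝ)/3) :=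
        Real.mul_rpow (by norm_num) (by positivity)
    _ = 2 ^ ((5:ℝ)/3) * y ^ 5 := by
        rw [← Real.rpow_natCast y 3, ← Real.rpow_mul hy]
        rw [show (((3:ℕ):ℝ) * (5/3)) = ((5:ℕ):ℝ) by norm_num, Real.rpow_natCast]
    _ ≤ 4 * y ^ 5 := by nlinarith [h2, h5, Real.rpow_nonneg (by norm_num : (0:ℝ) ≤ 2) ((5:ℝ)/3)]

set_option maxHeartbeats 1000000 in
/-- Quantitative bounds for the neutron star equation of state
`P_NS = h̃ ∘ g̃⁻¹`: (i) `|P_NS(ρ) − ρ/3| ≤ C√ρ` and `|P_NS′(ρ) − 1/3| ≤ C ρ^{−1/2}`;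
(ii) for small `ρ > 0`, `c ρ^{2/3} ≤ P_NS′(ρ) ≤ ρ^{2/3}` and `c ρ^{5/3} ≤ P_NS(ρ) ≤ C ρ^{5/3}`;
(iii) `P_NS` is a bijection of `[0,∞)` with `|P_NS⁻¹(q) − 3q| ≤ C√q`. -/
theorem stmt16 (P : ℝ → ℝ)
    (hP : ∀ y : ℝ, 0 ≤ y → P (gtilde y) = htilde y) :
    ∃ c C : ℝ, 0 < c ∧ c ≤ C ∧
      (∀ ρ : ℝ, 0 ≤ ρ → |P ρ - ρ / 3| ≤ C * Real.sqrt ρ) ∧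
      (∀ ρ : ℝ, 0 < ρ → |deriv P ρ - 1 / 3| ≤ C * ρ ^ (-(1/2) : ℝ)) ∧
      (∃ ρ₀ : ℝ, 0 < ρ₀ ∧ ∀ ρ ∈ Set.Ioo (0:ℝ) ρ₀,
        c * ρ ^ ((2:ℝ)/3) ≤ deriv P ρ ∧ deriv P ρ ≤ ρ ^ ((2:ℝ)/3) ∧
        c * ρ ^ ((5:ℝ)/3) ≤ P ρ ∧ P ρ ≤ C * ρ ^ ((5:ℝ)/3)) ∧
      Set.BijOn P (Set.Ici 0) (Set.Ici 0) ∧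
      (∀ q : ℝ, 0 < q → ∀ ρ : ℝ, 0 ≤ ρ → P ρ = q → |ρ - 3 * q| ≤ C * Real.sqrt q) := by
  refine ⟨1/40, 5, by norm_num, by norm_num, ?_, ?_, ?_, ?_, ?_⟩
  · -- (i) first bound
    intro ρ hρ
    set y := gIso.symm ρ with hy'
    have hy : 0 ≤ y := ginv_nonneg hρ
    have hgy : gtilde y = ρ := g_ginv ρ
    have hPρ : P ρ = htilde y := P_eq P hP hρ
    set F := ∫ s in (0:ℝ)..y, fF s with hF'
    have hFe : gtilde y / 3 - htilde y = F := F_eq y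
    have hF0 : 0 ≤ F := F_nonneg hy
    have habs : |P ρ - ρ / 3| = F := by
      rw [hPρ, ← hgy, abs_sub_comm, abs_of_nonneg (by linarith)]
      linarith
    have hcc : F ≤ y ^ 3 / 3 := F_le_cube hy
    have hcs : F ≤ y ^ 2 / 2 := F_le_sq hy
    clear_value F y
    rw [habs]
    have hsq : F ^ 2 ≤ 25 * ρ := by
      have h3 : y ^ 3 ≤ ρ := by rw [← hgy]; exact cube_le_g hy
      have h4 : 3 / 4 * y ^ 4 ≤ ρ := by rw [← hgy]; exact quart_le_g hy
      rcases le_total y 1 with h1 | h1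
      · have h63 : y ^ 6 ≤ y ^ 3 := pow_le_pow_of_le_one hy h1 (by norm_num)
        nlinarith [mul_le_mul hcc hcc hF0 (by positivity : (0:ℝ) ≤ y ^ 3 / 3)]
      · nlinarith [mul_le_mul hcs hcs hF0 (by positivity : (0:ℝ) ≤ y ^ 2 / 2)]
    calc F ≤ Real.sqrt (25 * ρ) := Real.le_sqrt_of_sq_le hsq
      _ = 5 * Real.sqrt ρ := by
          rw [show (25:ℝ) * ρ = 5 ^ 2 * ρ by norm_num, Real.sqrt_mul (by positivity) ρ,
            Real.sqrt_sq (by norm_num : (0:ℝ) ≤ 5)]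
  · -- (i) derivative bound
    intro ρ hρ
    set y := gIso.symm ρ with hy'
    have hy : 0 < y := ginv_pos hρ
    have hgy : gtilde y = ρ := g_ginv ρ
    have hD : deriv P ρ = y ^ 2 / (3 * (1 + y ^ 2)) := deriv_P P hP hρ
    have h1y : (0:ℝ) < 1 + y ^ 2 := by positivity
    have heq : deriv P ρ - 1 / 3 = -(1 / (3 * (1 + y ^ 2))) := by
      rw [hD]; field_simp; ring
    rw [heq, abs_neg, abs_of_nonneg (by positivity)]
    have hgu : ρ ≤ y ^ 3 + 3 / 4 * y ^ 4 := by rw [← hgy]; exact g_upper hy.le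
    clear_value y
    have hle : Real.sqrt ρ ≤ 3 * (1 + y ^ 2) := by
      rw [show (3:ℝ) * (1 + y ^ 2) = Real.sqrt ((3 * (1 + y ^ 2)) ^ 2) from
        (Real.sqrt_sq (by positivity)).symm]
      apply Real.sqrt_le_sqrt
      nlinarith [sq_nonneg (y * (y - 1)), sq_nonneg y, sq_nonneg (y ^ 2 - 1)]
    have hrpow : (5:ℝ) * ρ ^ (-(1/2) : ℝ) = 5 / Real.sqrt ρ := by
      rw [Real.rpow_neg hρ.le, ← Real.sqrt_eq_rpow, div_eq_mul_inv]
    rw [hrpow]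
    have hsρ : 0 < Real.sqrt ρ := Real.sqrt_pos.mpr hρ
    rw [div_le_div_iff₀ (by positivity) hsρ]
    nlinarith [hle, hsρ]
  · -- (ii) small ρ
    refine ⟨1, one_pos, ?_⟩
    rintro ρ ⟨hρ, hρ1⟩
    set y := gIso.symm ρ with hy'
    have hy : 0 < y := ginv_pos hρ
    have hgy : gtilde y = ρ := g_ginv ρ
    have hy1 : y ≤ 1 := by
      by_contra hgt
      push_neg at hgt
      have h1 : gtilde 1 < gtilde y := g_strictMono hgt
      have h2 : (1:ℝ) ≤ gtilde 1 := by
        have := cube_le_g (by norm_num : (0:ℝ) ≤ 1); linarith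
      linarith
    have h3 : y ^ 3 ≤ ρ := by rw [← hgy]; exact cube_le_g hy.le
    have hu : ρ ≤ 2 * y ^ 3 := by
      have hgu := g_upper hy.le
      have h4 : y ^ 4 ≤ y ^ 3 := pow_le_pow_of_le_one hy.le hy1 (by norm_num)
      rw [← hgy]; linarith
    have hD : deriv P ρ = y ^ 2 / (3 * (1 + y ^ 2)) := deriv_P P hP hρ
    have hPρ : P ρ = htilde y := P_eq P hP hρ.le
    clear_value y
    have e23g := rpow23_ge hy.le h3
    have e23l := rpow23_le hy.le hρ.le hu
    have e53g := rpow53_ge hy.le h3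
    have e53l := rpow53_le hy.le hρ.le hu
    have hy2 : y ^ 2 ≤ 1 := pow_le_one₀ hy.le hy1
    refine ⟨?_, ?_, ?_, ?_⟩
    · rw [hD]
      have hd6 : y ^ 2 / 6 ≤ y ^ 2 / (3 * (1 + y ^ 2)) := by
        gcongr
        nlinarith [hy2]
      linarith
    · rw [hD]
      have hd3 : y ^ 2 / (3 * (1 + y ^ 2)) ≤ y ^ 2 / 3 := by
        gcongr
        nlinarith [sq_nonneg y]
      nlinarith [sq_nonneg y]
    · rw [hPρ]
      have hl := h_lower hy.le
      have hl10 : y ^ 5 / 10 ≤ y ^ 5 / (5 * (1 + y)) := by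
        gcongr
        linarith
      linarith
    · rw [hPρ]
      have hup := h_upper hy.le
      have h5 : (0:ℝ) ≤ y ^ 5 := by positivity
      have hr : (0:ℝ) ≤ ρ ^ ((5:ℝ)/3) := Real.rpow_nonneg hρ.le _
      linarith
  · -- (iii) BijOn
    refine ⟨?_, ?_, ?_⟩
    · intro ρ hρ
      rw [mem_Ici] at hρ ⊢
      rw [P_eq P hP hρ]
      exact h_nonneg (ginv_nonneg hρ)
    · intro ρ1 h1 ρ2 h2 heq
      rw [mem_Ici] at h1 h2
      rw [P_eq P hP h1, P_eq P hP h2] at heq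
      have hy1 := ginv_nonneg h1
      have hy2 := ginv_nonneg h2
      have hyy : gIso.symm ρ1 = gIso.symm ρ2 := by
        rcases lt_trichotomy (gIso.symm ρ1) (gIso.symm ρ2) with h | h | h
        · exact absurd heq (ne_of_lt (h_lt_h hy1 h))
        · exact h
        · exact absurd heq.symm (ne_of_lt (h_lt_h hy2 h))
      calc ρ1 = gtilde (gIso.symm ρ1) := (g_ginv ρ1).symm
        _ = gtilde (gIso.symm ρ2) := by rw [hyy]
        _ = ρ2 := g_ginv ρ2
    · intro q hq
      rw [mem_Ici] at hq
      set b := 3 * q + 3 with hb'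
      have hb3 : (3:ℝ) ≤ b := by linarith
      have hb0 : (0:ℝ) ≤ b := by linarith
      clear_value b
      have hqb : q ≤ htilde b := by
        have hl := h_lower hb0
        have key : q ≤ b ^ 5 / (5 * (1 + b)) := by
          rw [le_div_iff₀ (by positivity)]
          have hbb : (27:ℝ) ≤ b ^ 3 := by
            nlinarith [mul_nonneg (by linarith : (0:ℝ) ≤ b - 3)
              (by nlinarith [sq_nonneg b] : (0:ℝ) ≤ b ^ 2 + 3 * b + 9)]
          have h2 : q * (5 * (1 + b)) ≤ 20 / 9 * b ^ 2 := by
            nlinarith [mul_nonneg (by linarith : (0:ℝ) ≤ b / 3 - q)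
              (by linarith : (0:ℝ) ≤ 5 + 5 * b),
              mul_le_mul_of_nonneg_left hb3 hb0]
          have h3 : 20 / 9 * b ^ 2 ≤ b ^ 5 := by
            nlinarith [mul_nonneg (pow_nonneg hb0 2) (by linarith : (0:ℝ) ≤ b ^ 3 - 20 / 9)]
          linarith
        linarith
      obtain ⟨y0, hy0mem, hy0⟩ := intermediate_value_Icc hb0 cont_h.continuousOn
        ⟨by rw [h_zero]; exact hq, hqb⟩
      refine ⟨gtilde y0, ?_, ?_⟩
      · rw [mem_Ici]
        exact le_trans (pow_nonneg hy0mem.1 3) (cube_le_g hy0mem.1)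
      · rw [hP y0 hy0mem.1, hy0]
  · -- (iii) inverse bound
    intro q hq ρ hρ hPq
    set y := gIso.symm ρ with hy'
    have hy : 0 ≤ y := ginv_nonneg hρ
    have hgy : gtilde y = ρ := g_ginv ρ
    have hhy : htilde y = q := by rw [← P_eq P hP hρ]; exact hPq
    set F := ∫ s in (0:ℝ)..y, fF s with hF'
    have hFe : gtilde y / 3 - htilde y = F := F_eq y
    have hF0 : 0 ≤ F := F_nonneg hy
    have hcc : F ≤ y ^ 3 / 3 := F_le_cube hy
    have hcs : F ≤ y ^ 2 / 2 := F_le_sq hy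
    clear_value F y
    have habs : |ρ - 3 * q| = 3 * F := by
      rw [← hgy, ← hhy, abs_of_nonneg (by linarith)]
      linarith
    rw [habs]
    have hql : y ^ 5 / (5 * (1 + y)) ≤ q := by rw [← hhy]; exact h_lower hy
    have hsq : (3 * F) ^ 2 ≤ 25 * q := by
      rcases le_total y 1 with h1 | h1
      · have h65 : y ^ 6 ≤ y ^ 5 := pow_le_pow_of_le_one hy h1 (by norm_num)
        have hql2 : y ^ 5 / 10 ≤ q := by
          have h10 : y ^ 5 / 10 ≤ y ^ 5 / (5 * (1 + y)) := by
            gcongr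
            linarith
          linarith
        nlinarith [mul_le_mul hcc hcc hF0 (by positivity : (0:ℝ) ≤ y ^ 3 / 3)]
      · have hql2 : y ^ 4 / 10 ≤ q := by
          have hy0 : y ≠ 0 := by intro h; rw [h] at h1; norm_num at h1
          have heq5 : y ^ 5 / (5 * (2 * y)) = y ^ 4 / 10 := by
            rw [show (5:ℝ) * (2 * y) = 10 * y by ring]
            field_simp
          have h10 : y ^ 5 / (5 * (2 * y)) ≤ y ^ 5 / (5 * (1 + y)) := by
            gcongr
            linarith
          rw [heq5] at h10
          linarith
        nlinarith [mul_le_mul hcs hcs hF0 (by positivity : (0:ℝ) ≤ y ^ 2 / 2)]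
    calc 3 * F ≤ Real.sqrt (25 * q) := Real.le_sqrt_of_sq_le hsq
      _ = 5 * Real.sqrt q := by
          rw [show (25:ℝ) * q = 5 ^ 2 * q by norm_num, Real.sqrt_mul (by positivity) q,
            Real.sqrt_sq (by norm_num : (0:ℝ) ≤ 5)]


end
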